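/- Let (λ, v) with v = (x; y; z) ∈ ℂ^{n+m+l} be an eigenpair of G_{α,β} = I − P⁻¹𝓑 with λ ≠ 0 and λ ≠ 1 and ‖y‖₂ = 1. If yᴴCᵀ(αI + βCCᵀ)⁻¹Cy + 2 yᴴBA⁻¹Bᵀy < 4 yᴴ(αI + βBBᵀ)y, then |λ| < 1. -/

import Mathlib

open Matrix

section Helpers

lemma mapC_mul {a b c : Type*} [Fintype b] (M : Matrix a b ℝ) (N : Matrix b c ℝ) :
    (M * N).map Complex.ofReal = M.map Complex.ofReal * N.map Complex.ofReal := by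
  ext i j
  simp [mul_apply]

lemma mapC_one {a : Type*} [Fintype a] [DecidableEq a] : ((1 : Matrix a a ℝ).map Complex.ofReal) = 1 := by
  ext i j
  simp [Matrix.one_apply, apply_ite]

lemma mapC_zero {a b : ℕ} : ((0 : Matrix (Fin a) (Fin b) ℝ).map Complex.ofReal) = 0 := by
  ext i j; simp

lemma mapC_neg {a b : ℕ} (M : Matrix (Fin a) (Fin b) ℝ) :
    ((-M).map Complex.ofReal) = -(M.map Complex.ofReal) := by
  ext i j; simp

lemma fromRows_mapC {a b c : ℕ} (X : Matrix (Fin a) (Fin c) ℝ) (Y : Matrix (Fin b) (Fin c) ℝ) :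
    (fromRows X Y).map Complex.ofReal = fromRows (X.map Complex.ofReal) (Y.map Complex.ofReal) := by
  ext (i | i) j <;> rfl

lemma fromColumns_mapC {a b c : ℕ} (X : Matrix (Fin c) (Fin a) ℝ) (Y : Matrix (Fin c) (Fin b) ℝ) :
    (fromCols X Y).map Complex.ofReal
      = fromCols (X.map Complex.ofReal) (Y.map Complex.ofReal) := by
  ext i (j | j) <;> rfl

lemma conjT_map_real {k q : ℕ} (M : Matrix (Fin k) (Fin q) ℝ) :
    (M.map Complex.ofReal)ᴴ = Mᵀ.map Complex.ofReal := by
  ext i j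
  simp [conjTranspose_apply, Matrix.map_apply]

lemma quad_real {k : ℕ} (M : Matrix (Fin k) (Fin k) ℝ) (hM : Mᵀ = M) (u : Fin k → ℂ) :
    star u ⬝ᵥ (M.map Complex.ofReal) *ᵥ u = ((star u ⬝ᵥ (M.map Complex.ofReal) *ᵥ u).re : ℂ) := by
  have hconj : star (star u ⬝ᵥ (M.map Complex.ofReal) *ᵥ u)
      = star u ⬝ᵥ (M.map Complex.ofReal) *ᵥ u := by
    rw [← star_dotProduct, star_mulVec, conjT_map_real, hM, dotProduct_mulVec]
  exact (Complex.conj_eq_iff_re.mp hconj).symm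

lemma quad_re {k : ℕ} (M : Matrix (Fin k) (Fin k) ℝ) (u : Fin k → ℂ) :
    (star u ⬝ᵥ (M.map Complex.ofReal) *ᵥ u).re =
      (fun i => (u i).re) ⬝ᵥ M *ᵥ (fun i => (u i).re) +
      (fun i => (u i).im) ⬝ᵥ M *ᵥ (fun i => (u i).im) := by
  simp only [dotProduct, mulVec, Matrix.map_apply, Pi.star_apply, Finset.mul_sum,
    Complex.re_sum, Complex.mul_re, Complex.mul_im, Complex.ofReal_re, Complex.ofReal_im,
    RCLike.star_def, Complex.conj_re, Complex.conj_im]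
  rw [← Finset.sum_add_distrib]
  refine Finset.sum_congr rfl fun i _ => ?_
  rw [← Finset.sum_add_distrib]
  refine Finset.sum_congr rfl fun j _ => ?_
  ring

lemma posDef_shift {k q : ℕ} (α β : ℝ) (hα : 0 < α) (hβ : 0 < β)
    (M : Matrix (Fin k) (Fin q) ℝ) :
    (α • (1 : Matrix (Fin k) (Fin k) ℝ) + β • (M * Mᵀ)).PosDef := by
  have hsym : (M * Mᵀ)ᵀ = M * Mᵀ := by rw [transpose_mul, transpose_transpose]
  have h1 : (α • (1 : Matrix (Fin k) (Fin k) ℝ)).PosDef := by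
    refine .of_dotProduct_mulVec_pos ?_ ?_
    · ext i j
      simp [conjTranspose_apply, Matrix.one_apply, eq_comm]
    · intro x hx
      simp only [smul_mulVec, one_mulVec, dotProduct_smul, smul_eq_mul]
      have := dotProduct_star_self_pos_iff (v := x) |>.mpr hx
      positivity
  have hMMt : (M * Mᵀ).PosSemidef := by
    have := posSemidef_self_mul_conjTranspose M
    rwa [conjTranspose_eq_transpose_of_trivial] at this
  have h2 : (β • (M * Mᵀ)).PosSemidef := by
    refine .of_dotProduct_mulVec_nonneg ?_ ?_
    · show (β • (M * Mᵀ))ᴴ = β • (M * Mᵀ)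
      rw [conjTranspose_eq_transpose_of_trivial, transpose_smul, hsym]
    · intro x
      rw [smul_mulVec, dotProduct_smul]
      exact smul_nonneg hβ.le (hMMt.dotProduct_mulVec_nonneg x)
  exact h1.add_posSemidef h2

lemma transpose_mulVec_eq_zero {k q : ℕ} (B : Matrix (Fin k) (Fin q) ℝ) (hB : B.rank = k)
    (a : Fin k → ℝ) (h : Bᵀ *ᵥ a = 0) : a = 0 := by
  have hS : (B * Bᵀ).rank = k := by rw [Matrix.rank_self_mul_transpose, hB]
  have hfin : Module.finrank ℝ (Fin k → ℝ) = k := by simp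
  have hsurj : LinearMap.range (B * Bᵀ).mulVecLin = ⊤ := by
    apply Submodule.eq_top_of_finrank_eq
    rw [hfin]
    exact hS
  have hinj : Function.Injective (B * Bᵀ).mulVecLin :=
    (LinearMap.injective_iff_surjective).2 (LinearMap.range_eq_top.1 hsurj)
  have h0 : (B * Bᵀ) *ᵥ a = 0 := by rw [← mulVec_mulVec, h, mulVec_zero]
  exact hinj (by rw [mulVecLin_apply, mulVecLin_apply, h0, mulVec_zero])

lemma parts_ne_zero {k : ℕ} (u : Fin k → ℂ) (hu : u ≠ 0) :
    (fun i => (u i).re) ≠ 0 ∨ (fun i => (u i).im) ≠ 0 := by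
  by_contra h
  push_neg at h
  obtain ⟨h1, h2⟩ := h
  apply hu
  funext i
  have e1 := congrFun h1 i
  have e2 := congrFun h2 i
  simp only [Pi.zero_apply] at e1 e2 ⊢
  exact Complex.ext e1 e2

lemma real_psd_nonneg {k : ℕ} {M : Matrix (Fin k) (Fin k) ℝ} (hM : M.PosSemidef)
    (w : Fin k → ℝ) : 0 ≤ w ⬝ᵥ M *ᵥ w := by
  have := hM.dotProduct_mulVec_nonneg w
  simpa using this

lemma real_pd_pos {k : ℕ} {M : Matrix (Fin k) (Fin k) ℝ} (hM : M.PosDef)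
    (w : Fin k → ℝ) (hw : w ≠ 0) : 0 < w ⬝ᵥ M *ᵥ w := by
  have := hM.dotProduct_mulVec_pos hw
  simpa using this

lemma quad_pos {k : ℕ} {M : Matrix (Fin k) (Fin k) ℝ} (hM : M.PosDef) (u : Fin k → ℂ)
    (hu : u ≠ 0) : 0 < (star u ⬝ᵥ (M.map Complex.ofReal) *ᵥ u).re := by
  rw [quad_re]
  rcases parts_ne_zero u hu with h | h
  · exact add_pos_of_pos_of_nonneg (real_pd_pos hM _ h) (real_psd_nonneg hM.posSemidef _)
  · exact add_pos_of_nonneg_of_pos (real_psd_nonneg hM.posSemidef _) (real_pd_pos hM _ h)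

lemma quad_nonneg {k : ℕ} {M : Matrix (Fin k) (Fin k) ℝ} (hM : M.PosSemidef) (u : Fin k → ℂ) :
    0 ≤ (star u ⬝ᵥ (M.map Complex.ofReal) *ᵥ u).re := by
  rw [quad_re]
  exact add_nonneg (real_psd_nonneg hM _) (real_psd_nonneg hM _)

lemma real_quad_conj {k q : ℕ} (A' : Matrix (Fin q) (Fin q) ℝ) (B : Matrix (Fin k) (Fin q) ℝ)
    (a : Fin k → ℝ) : a ⬝ᵥ (B * A' * Bᵀ) *ᵥ a = (Bᵀ *ᵥ a) ⬝ᵥ A' *ᵥ (Bᵀ *ᵥ a) := by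
  rw [← mulVec_mulVec, ← mulVec_mulVec, dotProduct_mulVec a B, ← mulVec_transpose]

lemma quad_conj_pos {k q : ℕ} {A' : Matrix (Fin q) (Fin q) ℝ} (hA' : A'.PosDef)
    (B : Matrix (Fin k) (Fin q) ℝ) (hB : B.rank = k) (u : Fin k → ℂ) (hu : u ≠ 0) :
    0 < (star u ⬝ᵥ ((B * A' * Bᵀ).map Complex.ofReal) *ᵥ u).re := by
  rw [quad_re, real_quad_conj, real_quad_conj]
  have hpsd := real_psd_nonneg (hA'.posSemidef)
  rcases parts_ne_zero u hu with h | h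
  · refine add_pos_of_pos_of_nonneg (real_pd_pos hA' _ ?_) (hpsd _)
    intro h0
    exact h (transpose_mulVec_eq_zero B hB _ h0)
  · refine add_pos_of_nonneg_of_pos (hpsd _) (real_pd_pos hA' _ ?_)
    intro h0
    exact h (transpose_mulVec_eq_zero B hB _ h0)

lemma scalar_endgame (S P Q : ℝ) (μ : ℂ) (hS : 0 < S) (hP : 0 < P) (hQ : 0 ≤ Q)
    (hineq : Q + 2*P < 4*S) (hμ0 : μ ≠ 0)
    (heq : (S:ℂ) * μ^2 - ((P:ℂ)+Q) * μ + Q = 0) : ‖1 - μ‖ < 1 := by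
  obtain ⟨a, b, rfl⟩ : ∃ a b : ℝ, μ = Complex.mk a b := ⟨μ.re, μ.im, rfl⟩
  have hre := congrArg Complex.re heq
  have him := congrArg Complex.im heq
  simp only [Complex.add_re, Complex.sub_re, Complex.mul_re, Complex.mul_im, Complex.add_im,
    Complex.sub_im, Complex.ofReal_re, Complex.ofReal_im, pow_two, Complex.zero_re,
    Complex.zero_im] at hre him
  have key : (1-a)*(1-a) + b*b < 1 := by
    rcases eq_or_ne b 0 with hb0 | hb0
    · subst hb0
      have ha0 : a ≠ 0 := by
        intro h; exact hμ0 (by simp [Complex.ext_iff, h])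
      have hapos : 0 < a := by
        rcases lt_trichotomy a 0 with h | h | h
        · nlinarith
        · exact absurd h ha0
        · exact h
      have halt : a < 2 := by
        by_contra h
        push_neg at h
        nlinarith [mul_nonneg (by nlinarith : (0:ℝ) ≤ a - 2)
          (by nlinarith : (0:ℝ) ≤ S*a + 2*S - P - Q)]
      nlinarith
    · have h2 : 2*S*a = P + Q := by
        have h3 : b * (S*a + S*a - (P+Q)) = 0 := by ring_nf; ring_nf at him; linarith [him]
        rcases mul_eq_zero.1 h3 with h | h
        · exact absurd h hb0
        · nlinarith [h]
      nlinarith [sq_nonneg b, hre, h2]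
  have habs : ‖1-Complex.mk a b‖^2 = (1-a)*(1-a) + b*b := by
    rw [Complex.sq_norm, Complex.normSq_apply]
    simp [Complex.sub_re, Complex.sub_im]
    try ring
  nlinarith [norm_nonneg (1-Complex.mk a b), habs, key]

end Helpers

/-- The double saddle point matrix 𝓑 = [[A, Bᵀ, 0], [−B, 0, −Cᵀ], [0, C, 0]]. -/
def calB {n m l : ℕ} (A : Matrix (Fin n) (Fin n) ℝ) (B : Matrix (Fin m) (Fin n) ℝ)
    (C : Matrix (Fin l) (Fin m) ℝ) :
    Matrix ((Fin n ⊕ Fin m) ⊕ Fin l) ((Fin n ⊕ Fin m) ⊕ Fin l) ℝ :=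
  fromBlocks (fromBlocks A Bᵀ (-B) 0) (fromRows 0 (-Cᵀ)) (fromCols 0 C) 0

/-- The block upper triangular preconditioner
`P = [[A, Bᵀ, 0], [0, αI + βBBᵀ, −Cᵀ], [0, 0, αI + βCCᵀ]]`. -/
def precondP {n m l : ℕ} (α β : ℝ) (A : Matrix (Fin n) (Fin n) ℝ)
    (B : Matrix (Fin m) (Fin n) ℝ) (C : Matrix (Fin l) (Fin m) ℝ) :
    Matrix ((Fin n ⊕ Fin m) ⊕ Fin l) ((Fin n ⊕ Fin m) ⊕ Fin l) ℝ :=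
  fromBlocks
    (fromBlocks A Bᵀ 0 (α • (1 : Matrix (Fin m) (Fin m) ℝ) + β • (B * Bᵀ)))
    (fromRows 0 (-Cᵀ)) 0 (α • (1 : Matrix (Fin l) (Fin l) ℝ) + β • (C * Cᵀ))

/-- The iteration matrix `G_{α,β} = I − P⁻¹ 𝓑`. -/
noncomputable def iterG {n m l : ℕ} (α β : ℝ) (A : Matrix (Fin n) (Fin n) ℝ)
    (B : Matrix (Fin m) (Fin n) ℝ) (C : Matrix (Fin l) (Fin m) ℝ) :
    Matrix ((Fin n ⊕ Fin m) ⊕ Fin l) ((Fin n ⊕ Fin m) ⊕ Fin l) ℝ :=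
  1 - (precondP α β A B C)⁻¹ * calB A B C

/-- Let `(λ, (x; y; z))` be an eigenpair of `G_{α,β} = I − P⁻¹𝓑` with `λ ≠ 0`, `λ ≠ 1`
and `‖y‖₂ = 1` (i.e. `yᴴ y = 1`). If
`yᴴCᵀ(αI + βCCᵀ)⁻¹Cy + 2 yᴴBA⁻¹Bᵀy < 4 yᴴ(αI + βBBᵀ)y`, then `|λ| < 1`. -/
theorem eigenvalue_modulus_lt_one {n m l : ℕ} (α β : ℝ)
    (A : Matrix (Fin n) (Fin n) ℝ) (B : Matrix (Fin m) (Fin n) ℝ)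
    (C : Matrix (Fin l) (Fin m) ℝ)
    (hA : A.PosDef) (hB : B.rank = m) (hC : C.rank = l) (hnm : m ≤ n) (hml : l ≤ m)
    (hα : 0 < α) (hβ : 0 < β)
    (lam : ℂ) (x : Fin n → ℂ) (y : Fin m → ℂ) (z : Fin l → ℂ)
    (hv : Sum.elim (Sum.elim x y) z ≠ 0)
    (heig : ((iterG α β A B C).map Complex.ofReal).mulVec (Sum.elim (Sum.elim x y) z) =
      lam • Sum.elim (Sum.elim x y) z)
    (hlam0 : lam ≠ 0) (hlam1 : lam ≠ 1)
    (hy : star y ⬝ᵥ y = 1)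
    (hineq :
      (star y ⬝ᵥ
          ((Cᵀ * (α • (1 : Matrix (Fin l) (Fin l) ℝ) + β • (C * Cᵀ))⁻¹ * C).map
            Complex.ofReal).mulVec y).re +
        2 * (star y ⬝ᵥ ((B * A⁻¹ * Bᵀ).map Complex.ofReal).mulVec y).re <
      4 * (star y ⬝ᵥ
          ((α • (1 : Matrix (Fin m) (Fin m) ℝ) + β • (B * Bᵀ)).map Complex.ofReal).mulVec y).re) :
    ‖lam‖ < 1 := by
  classical
  set SB : Matrix (Fin m) (Fin m) ℝ := α • (1 : Matrix (Fin m) (Fin m) ℝ) + β • (B * Bᵀ) with hSBdef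
  set SC : Matrix (Fin l) (Fin l) ℝ := α • (1 : Matrix (Fin l) (Fin l) ℝ) + β • (C * Cᵀ) with hSCdef
  have hSBpd : SB.PosDef := posDef_shift α β hα hβ B
  have hSCpd : SC.PosDef := posDef_shift α β hα hβ C
  set v : ((Fin n ⊕ Fin m) ⊕ Fin l) → ℂ := Sum.elim (Sum.elim x y) z with hvdef
  set μ : ℂ := 1 - lam with hμdef
  have hμ0 : μ ≠ 0 := sub_ne_zero.2 fun h => hlam1 h.symm
  have hμ1 : μ ≠ 1 := by
    intro h
    apply hlam0
    have : lam = 1 - μ := by rw [hμdef]; ring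
    rw [this, h]; ring
  -- P is invertible
  have hPdet : IsUnit (precondP α β A B C).det := by
    rw [precondP, det_fromBlocks_zero₂₁, det_fromBlocks_zero₂₁]
    exact (mul_pos (mul_pos hA.det_pos hSBpd.det_pos) hSCpd.det_pos).ne'.isUnit
  have hPP : precondP α β A B C * (precondP α β A B C)⁻¹ = 1 :=
    mul_nonsing_inv _ hPdet
  -- main block equation : 𝓑 v = μ • (P v)
  have h4 : (calB A B C).map Complex.ofReal *ᵥ v
      = μ • ((precondP α β A B C).map Complex.ofReal *ᵥ v) := by
    have h1 : ((iterG α β A B C).map Complex.ofReal)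
        = 1 - ((precondP α β A B C)⁻¹.map Complex.ofReal) * ((calB A B C).map Complex.ofReal) := by
      rw [iterG]
      ext i j
      simp [Matrix.sub_apply, Matrix.map_apply, mul_apply, Matrix.one_apply, apply_ite,
        Complex.ofReal_sum]
    rw [h1, sub_mulVec, one_mulVec] at heig
    have h2 : ((precondP α β A B C)⁻¹.map Complex.ofReal * (calB A B C).map Complex.ofReal) *ᵥ v
        = μ • v := by
      have hX : ((precondP α β A B C)⁻¹.map Complex.ofReal * (calB A B C).map Complex.ofReal) *ᵥ v
          = v - lam • v := by
        rw [sub_eq_iff_eq_add'] at heig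
        rw [eq_sub_iff_add_eq]
        exact heig.symm
      rw [hX, hμdef, sub_smul, one_smul]
    calc (calB A B C).map Complex.ofReal *ᵥ v
        = ((precondP α β A B C).map Complex.ofReal *
            ((precondP α β A B C)⁻¹.map Complex.ofReal * (calB A B C).map Complex.ofReal)) *ᵥ v := by
          rw [← Matrix.mul_assoc, ← mapC_mul, hPP, mapC_one, Matrix.one_mul]
      _ = (precondP α β A B C).map Complex.ofReal *ᵥ
            (((precondP α β A B C)⁻¹.map Complex.ofReal * (calB A B C).map Complex.ofReal) *ᵥ v) := by
          rw [mulVec_mulVec]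
      _ = μ • ((precondP α β A B C).map Complex.ofReal *ᵥ v) := by
          rw [h2, mulVec_smul]
  -- component equations
  have E1 : A.map Complex.ofReal *ᵥ x + Bᵀ.map Complex.ofReal *ᵥ y
      = μ • (A.map Complex.ofReal *ᵥ x + Bᵀ.map Complex.ofReal *ᵥ y) := by
    funext i
    have h := congrFun h4 (Sum.inl (Sum.inl i))
    simpa [calB, precondP, fromBlocks_map, fromRows_mapC, fromColumns_mapC, mapC_zero, mapC_neg,
      fromBlocks_mulVec, fromRows_mulVec, fromCols_mulVec_sumElim, zero_mulVec, neg_mulVec,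
      hvdef] using h
  have E2 : -(B.map Complex.ofReal *ᵥ x) + -(Cᵀ.map Complex.ofReal *ᵥ z)
      = μ • (SB.map Complex.ofReal *ᵥ y + -(Cᵀ.map Complex.ofReal *ᵥ z)) := by
    funext i
    have h := congrFun h4 (Sum.inl (Sum.inr i))
    simpa [calB, precondP, fromBlocks_map, fromRows_mapC, fromColumns_mapC, mapC_zero, mapC_neg,
      fromBlocks_mulVec, fromRows_mulVec, fromCols_mulVec_sumElim, zero_mulVec, neg_mulVec,
      hvdef] using h
  have E3 : C.map Complex.ofReal *ᵥ y = μ • (SC.map Complex.ofReal *ᵥ z) := by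
    funext i
    have h := congrFun h4 (Sum.inr i)
    simpa [calB, precondP, fromBlocks_map, fromRows_mapC, fromColumns_mapC, mapC_zero, mapC_neg,
      fromBlocks_mulVec, fromRows_mulVec, fromCols_mulVec_sumElim, zero_mulVec, neg_mulVec,
      hvdef] using h
  -- A x = -(Bᵀ y)
  have hAdet : IsUnit A.det := hA.det_pos.ne'.isUnit
  have hAinv : A⁻¹ * A = 1 := nonsing_inv_mul A hAdet
  have hw0 : A.map Complex.ofReal *ᵥ x + Bᵀ.map Complex.ofReal *ᵥ y = 0 := by
    have h5 : (1 - μ) • (A.map Complex.ofReal *ᵥ x + Bᵀ.map Complex.ofReal *ᵥ y) = 0 := by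
      rw [sub_smul, one_smul, ← E1, sub_self]
    rcases smul_eq_zero.mp h5 with h | h
    · exact absurd (by linear_combination -h : μ = 1) hμ1
    · exact h
  have hx : x = -(A⁻¹.map Complex.ofReal *ᵥ (Bᵀ.map Complex.ofReal *ᵥ y)) := by
    have h6 : A.map Complex.ofReal *ᵥ x = -(Bᵀ.map Complex.ofReal *ᵥ y) := by
      rw [eq_neg_iff_add_eq_zero]
      exact hw0
    calc x = (A⁻¹ * A).map Complex.ofReal *ᵥ x := by rw [hAinv, mapC_one, one_mulVec]
    _ = A⁻¹.map Complex.ofReal *ᵥ (A.map Complex.ofReal *ᵥ x) := by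
        rw [mapC_mul, ← mulVec_mulVec]
    _ = -(A⁻¹.map Complex.ofReal *ᵥ (Bᵀ.map Complex.ofReal *ᵥ y)) := by rw [h6, mulVec_neg]
  have hBx : B.map Complex.ofReal *ᵥ x = -((B * A⁻¹ * Bᵀ).map Complex.ofReal *ᵥ y) := by
    rw [hx, mulVec_neg, mulVec_mulVec, mulVec_mulVec, ← mapC_mul, ← mapC_mul]
  have hSCdet : IsUnit SC.det := hSCpd.det_pos.ne'.isUnit
  have hSCinv : SC⁻¹ * SC = 1 := nonsing_inv_mul _ hSCdet
  have hz : (SC⁻¹ * C).map Complex.ofReal *ᵥ y = μ • z := by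
    have h7 := congrArg (fun w => SC⁻¹.map Complex.ofReal *ᵥ w) E3
    rwa [mulVec_smul, mulVec_mulVec, mulVec_mulVec, ← mapC_mul, ← mapC_mul, hSCinv, mapC_one,
      one_mulVec] at h7
  set p : ℂ := star y ⬝ᵥ (B * A⁻¹ * Bᵀ).map Complex.ofReal *ᵥ y with hpdef
  set q : ℂ := star y ⬝ᵥ (Cᵀ * SC⁻¹ * C).map Complex.ofReal *ᵥ y with hqdef
  set s : ℂ := star y ⬝ᵥ SB.map Complex.ofReal *ᵥ y with hsdef
  set cz : ℂ := star y ⬝ᵥ Cᵀ.map Complex.ofReal *ᵥ z with hczdef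
  have heq2 : μ * cz = q := by
    calc μ * cz = star y ⬝ᵥ Cᵀ.map Complex.ofReal *ᵥ (μ • z) := by
          rw [mulVec_smul, dotProduct_smul, smul_eq_mul]
    _ = q := by
          rw [← hz, mulVec_mulVec, ← mapC_mul, ← Matrix.mul_assoc]
  rw [hBx] at E2
  have hdot := congrArg (fun w => star y ⬝ᵥ w) E2
  simp only [neg_neg, dotProduct_add, dotProduct_neg, dotProduct_smul, smul_eq_mul] at hdot
  -- hdot : p + -cz = μ * (s + -cz)
  have hquad : s * μ^2 - (p + q) * μ + q = 0 := by
    linear_combination (-μ) * hdot + (μ - 1) * heq2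
  -- realness
  have hAinvT : (A⁻¹)ᵀ = A⁻¹ := by
    have h9 : (A⁻¹)ᴴ = A⁻¹ := hA.inv.1
    rwa [conjTranspose_eq_transpose_of_trivial] at h9
  have hSCinvT : (SC⁻¹)ᵀ = SC⁻¹ := by
    have h9 : (SC⁻¹)ᴴ = SC⁻¹ := hSCpd.inv.1
    rwa [conjTranspose_eq_transpose_of_trivial] at h9
  have hBABsym : (B * A⁻¹ * Bᵀ)ᵀ = B * A⁻¹ * Bᵀ := by
    rw [transpose_mul, transpose_mul, transpose_transpose, hAinvT, ← Matrix.mul_assoc]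
  have hCsym : (Cᵀ * SC⁻¹ * C)ᵀ = Cᵀ * SC⁻¹ * C := by
    rw [transpose_mul, transpose_mul, transpose_transpose, hSCinvT, ← Matrix.mul_assoc]
  have hSBsym : SBᵀ = SB := by
    have h9 : SBᴴ = SB := hSBpd.1
    rwa [conjTranspose_eq_transpose_of_trivial] at h9
  have hyne : y ≠ 0 := by
    intro h
    rw [h] at hy
    simp at hy
  obtain ⟨P', hP'⟩ : ∃ P' : ℝ, p = (P' : ℂ) := ⟨_, quad_real _ hBABsym y⟩
  obtain ⟨Q', hQ'⟩ : ∃ Q' : ℝ, q = (Q' : ℂ) := ⟨_, quad_real _ hCsym y⟩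
  obtain ⟨S', hS'⟩ : ∃ S' : ℝ, s = (S' : ℂ) := ⟨_, quad_real _ hSBsym y⟩
  have hPpos : 0 < P' := by
    have h8 := quad_conj_pos hA.inv B hB y hyne
    rw [← hpdef, hP'] at h8
    simpa using h8
  have hQnonneg : 0 ≤ Q' := by
    have hCpsd : (Cᵀ * SC⁻¹ * C).PosSemidef := by
      have := (hSCpd.inv.posSemidef).conjTranspose_mul_mul_same C
      rwa [conjTranspose_eq_transpose_of_trivial] at this
    have h8 := quad_nonneg hCpsd y
    rw [← hqdef, hQ'] at h8
    simpa using h8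
  have hSpos : 0 < S' := by
    have h8 := quad_pos hSBpd y hyne
    rw [← hsdef, hS'] at h8
    simpa using h8
  have hineq' : Q' + 2 * P' < 4 * S' := by
    rw [hP', hQ', hS'] at hineq
    simpa using hineq
  have hquad' : (S' : ℂ) * μ^2 - ((P' : ℂ) + Q') * μ + Q' = 0 := by
    rw [hP', hQ', hS'] at hquad
    exact hquad
  have habs := scalar_endgame S' P' Q' μ hSpos hPpos hQnonneg hineq' hμ0 hquad'
  have hfin : (1 : ℂ) - μ = lam := by rw [hμdef]; ring
  rwa [hfin] at habs
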